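/- For n ≥ 2, the augmented cube AQ_n is vertex-transitive. -/

import Mathlib

/-- The augmented cube `AQ n` on vertex set `{0,1}^n`: distinct vertices `u, v` are
adjacent iff there is an index `k` such that they agree before `k` and either differ
only at `k` (hypercube-type edge) or differ at `k` and at every later coordinate
(complement-type edge). -/
def AQ (n : ℕ) : SimpleGraph (Fin n → Bool) where
  Adj u v := u ≠ v ∧ ∃ k : Fin n, (∀ i, i < k → u i = v i) ∧
      ((∀ i, i ≠ k → u i = v i) ∨ (∀ i, k ≤ i → u i ≠ v i))
  symm := ⟨by
    rintro u v ⟨hne, k, hpre, h⟩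
    refine ⟨hne.symm, k, fun i hi => (hpre i hi).symm, ?_⟩
    rcases h with h | h
    · exact Or.inl fun i hi => (h i hi).symm
    · exact Or.inr fun i hi e => h i hi e.symm⟩
  loopless := ⟨fun u h => h.1 rfl⟩

lemma xor_eq_iff (a b c : Bool) : xor a c = xor b c ↔ a = b := by
  cases a <;> cases b <;> cases c <;> simp

/-- For `n ≥ 2`, the augmented cube `AQ_n` is vertex-transitive. -/
theorem aq_vertex_transitive (n : ℕ) (hn : 2 ≤ n) (u v : Fin n → Bool) :
    ∃ φ : AQ n ≃g AQ n, φ u = v := by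
  set w : Fin n → Bool := fun i => xor (u i) (v i) with hw
  refine ⟨⟨⟨fun x i => xor (x i) (w i), fun x i => xor (x i) (w i),
    fun x => by funext i; cases w i <;> simp,
    fun x => by funext i; cases w i <;> simp⟩, ?_⟩, ?_⟩
  · intro a b
    show (AQ n).Adj _ _ ↔ (AQ n).Adj a b
    constructor
    · rintro ⟨hne, k, hpre, h⟩
      refine ⟨fun e => hne (by rw [e]), k, fun i hi => (xor_eq_iff _ _ _).mp (hpre i hi), ?_⟩
      rcases h with h | h
      · exact Or.inl fun i hi => (xor_eq_iff _ _ _).mp (h i hi)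
      · exact Or.inr fun i hi e => h i hi ((xor_eq_iff _ _ _).mpr e)
    · rintro ⟨hne, k, hpre, h⟩
      refine ⟨fun e => hne (funext fun i =>
        (xor_eq_iff _ _ _).mp (congrFun e i)), k,
        fun i hi => (xor_eq_iff _ _ _).mpr (hpre i hi), ?_⟩
      rcases h with h | h
      · exact Or.inl fun i hi => (xor_eq_iff _ _ _).mpr (h i hi)
      · exact Or.inr fun i hi e => h i hi ((xor_eq_iff _ _ _).mp e)
  · funext i
    show xor (u i) (xor (u i) (v i)) = v i
    cases u i <;> cases v i <;> simp
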